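/- Let M ∈ ℕ and let f(z) = Σ_{i=0}^n aᵢzⁱ be a nonzero polynomial with integer coefficients satisfying |aᵢ| ≤ M for all i. Then the number of roots of f (counted with multiplicity) of modulus at least 3/2 is at most 64M. -/

import Mathlib

open Polynomial Finset

noncomputable section Stmt11Aux

private def tR : ℝ := 64/81
private def tC : ℂ := ((64/81 : ℝ) : ℂ)

private def NN (n : ℕ) (p : Polynomial ℂ) : ℝ :=
  ∑ i ∈ Finset.range (n+1), Complex.normSq (p.coeff i) * tR ^ i

private lemma key_term (w D c : ℂ) :
    Complex.normSq ((starRingEnd ℂ) w * D - tC * c) =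
      tR * Complex.normSq (D - w * c)
        - (tR - Complex.normSq w) * (Complex.normSq D - tR * Complex.normSq c) := by
  simp only [Complex.normSq_apply, Complex.sub_re, Complex.sub_im, Complex.mul_re,
    Complex.mul_im, Complex.conj_re, Complex.conj_im, tC, tR, Complex.ofReal_re,
    Complex.ofReal_im]
  ring

private lemma swap_lemma (n : ℕ) (w : ℂ) (s : Polynomial ℂ) (hs : s.coeff n = 0) :
    NN n ((C ((starRingEnd ℂ) w) * X - C tC) * s) = tR * NN n ((X - C w) * s) := by
  have h1 : ∀ i, ((X - C w) * s).coeff i = (X * s).coeff i - w * s.coeff i := by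
    intro i
    rw [sub_mul, coeff_sub, coeff_C_mul]
  have h2 : ∀ i, ((C ((starRingEnd ℂ) w) * X - C tC) * s).coeff i
      = (starRingEnd ℂ) w * (X * s).coeff i - tC * s.coeff i := by
    intro i
    rw [sub_mul, coeff_sub, mul_assoc, coeff_C_mul, coeff_C_mul]
  have key : ∀ i ∈ Finset.range (n+1),
      Complex.normSq (((C ((starRingEnd ℂ) w) * X - C tC) * s).coeff i) * tR ^ i
      = tR * (Complex.normSq (((X - C w) * s).coeff i) * tR ^ i)
        - (tR - Complex.normSq w) *
          (Complex.normSq ((X * s).coeff i) * tR ^ i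
            - Complex.normSq ((X * s).coeff (i+1)) * tR ^ (i+1)) := by
    intro i _
    rw [h1, h2, key_term, coeff_X_mul]
    ring
  unfold NN
  have tele := Finset.sum_range_sub' (f := fun i => Complex.normSq ((X * s).coeff i) * tR ^ i) (n+1)
  have e0 : (X * s).coeff 0 = 0 := by simp [mul_coeff_zero]
  have en : (X * s).coeff (n+1) = 0 := by rw [coeff_X_mul, hs]
  rw [Finset.sum_congr rfl key, Finset.sum_sub_distrib, ← Finset.mul_sum, ← Finset.mul_sum, tele,
    e0, en]
  simp


private lemma deg_prod_lin (T : Multiset ℂ) :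
    ((T.map (fun w => X - C w)).prod).natDegree ≤ Multiset.card T := by
  refine le_trans (Polynomial.natDegree_multiset_prod_le _) ?_
  rw [Multiset.map_map]
  refine le_trans (Multiset.sum_map_le_sum_map _ (fun _ => 1) ?_) ?_
  · intro z _
    simp [natDegree_X_sub_C]
  · simp [Multiset.map_const']

private lemma landau (n : ℕ) (T : Multiset ℂ) : ∀ q : Polynomial ℂ,
    Multiset.card T + q.natDegree ≤ n →
    NN n ((T.map (fun w => C ((starRingEnd ℂ) w) * X - C tC)).prod * q)
      = tR ^ (Multiset.card T) * NN n ((T.map (fun w => X - C w)).prod * q) := by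
  induction T using Multiset.induction with
  | empty => intro q _; simp
  | cons w T ih =>
    intro q hq
    rw [Multiset.card_cons] at hq
    have hdq : (((C ((starRingEnd ℂ) w) * X - C tC)) * q).natDegree ≤ q.natDegree + 1 := by
      refine le_trans (natDegree_mul_le) ?_
      have : (C ((starRingEnd ℂ) w) * X - C tC).natDegree ≤ 1 := by
        refine le_trans (natDegree_sub_le _ _) ?_
        refine le_trans (max_le_iff.mpr ⟨?_, ?_⟩) le_rfl
        · exact le_trans (natDegree_C_mul_le _ _) (by simp)
        · simp
      omega
    have ih' := ih ((C ((starRingEnd ℂ) w) * X - C tC) * q) (by omega)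
    have e1 : ((w ::ₘ T).map (fun w => C ((starRingEnd ℂ) w) * X - C tC)).prod * q
        = (T.map (fun w => C ((starRingEnd ℂ) w) * X - C tC)).prod
          * ((C ((starRingEnd ℂ) w) * X - C tC) * q) := by
      rw [Multiset.map_cons, Multiset.prod_cons]; ring
    have hcoeffn : ((T.map (fun w => X - C w)).prod * q).coeff n = 0 := by
      apply coeff_eq_zero_of_natDegree_lt
      have h1 := deg_prod_lin T
      have h2 := natDegree_mul_le (p := (T.map (fun w => X - C w)).prod) (q := q)
      omega
    have e2 : (T.map (fun w => X - C w)).prod * ((C ((starRingEnd ℂ) w) * X - C tC) * q)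
        = (C ((starRingEnd ℂ) w) * X - C tC) * ((T.map (fun w => X - C w)).prod * q) := by
      ring
    have e3 : ((w ::ₘ T).map (fun w => X - C w)).prod * q
        = (X - C w) * ((T.map (fun w => X - C w)).prod * q) := by
      rw [Multiset.map_cons, Multiset.prod_cons]; ring
    rw [e1, ih', e2, swap_lemma n w _ hcoeffn, e3, Multiset.card_cons, pow_succ]
    ring


private lemma reverse_X_sub_C (z : ℂ) : (X - C z).reverse = 1 - C z * X := by
  have h : (X - C z) = C 1 * X ^ 1 + C (-z) * X ^ 0 := by simp [sub_eq_add_neg]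
  rw [Polynomial.reverse, natDegree_X_sub_C, h, reflect_add, reflect_C_mul_X_pow,
    reflect_C_mul_X_pow, revAt_le (by norm_num), revAt_le (by norm_num)]
  norm_num
  ring

private lemma reverse_prod (R : Multiset ℂ) :
    ((R.map (fun z => X - C z)).prod).reverse = (R.map (fun z => 1 - C z * X)).prod := by
  induction R using Multiset.induction with
  | empty => simp [Polynomial.reverse]
  | cons z R ih =>
    simp only [Multiset.map_cons, Multiset.prod_cons]
    rw [reverse_mul_of_domain, ih, reverse_X_sub_C]


private lemma nat16 : ∀ m : ℕ, 1 ≤ m → 5 * m^2 < 16 ^ m := by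
  intro m hm
  induction m with
  | zero => omega
  | succ p ih =>
    rcases Nat.eq_or_lt_of_le hm with h | h
    · simp [← h]
    · have hp : 1 ≤ p := by omega
      have := ih hp
      have h16 : 16 ^ (p+1) = 16 * 16 ^ p := by ring
      nlinarith [this, hp]

private lemma arith (M k : ℕ) (hM : 1 ≤ M) (h : ((16:ℝ)/9)^k ≤ 5 * (M:ℝ)^2) : k ≤ 64 * M := by
  by_contra hc
  push_neg at hc
  have h1 : ((16:ℝ)/9) ^ (64 * M) ≤ ((16:ℝ)/9)^k := by
    have hk : 64 * M ≤ k := by omega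
    exact pow_le_pow_right₀ (by norm_num) hk
  have hbase : (16:ℝ) ≤ ((16:ℝ)/9) ^ 64 := by
    rw [div_pow, le_div_iff₀ (by positivity)]
    norm_num
  have h2 : ((16:ℝ)) ^ M ≤ ((16:ℝ)/9) ^ (64*M) := by
    rw [pow_mul]
    exact pow_le_pow_left₀ (by norm_num) hbase M
  have h3 : 5 * (M:ℝ)^2 < 16 ^ M := by
    exact_mod_cast (by exact_mod_cast nat16 M hM : (5 * M^2 : ℕ) < (16^M : ℕ))
  linarith

end Stmt11Aux

set_option maxHeartbeats 2000000 in
open Polynomial Finset in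
open Classical in
/-- A nonzero integer polynomial with coefficients bounded by M has at most 64M roots
(with multiplicity) of modulus at least 3/2. -/
theorem stmt11 (M : ℕ) (f : Polynomial ℤ) (hf : f ≠ 0)
    (hcoeff : ∀ i, |f.coeff i| ≤ (M : ℤ)) :
    (((f.map (Int.castRingHom ℂ)).roots.filter
      (fun z => (3:ℝ)/2 ≤ ‖z‖)).card) ≤ 64 * M := by
  have hinj : Function.Injective (Int.castRingHom ℂ) := Int.cast_injective
  set F : Polynomial ℂ := f.map (Int.castRingHom ℂ) with hFdef
  have hFne : F ≠ 0 := (Polynomial.map_ne_zero_iff hinj).mpr hf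
  set n := F.natDegree with hn
  set R := F.roots with hRdef
  set c := F.leadingCoeff with hc
  have hsplit : F = C c * (R.map (fun z => X - C z)).prod :=
    (C_leadingCoeff_mul_prod_multiset_X_sub_C IsAlgClosed.card_roots_eq_natDegree).symm
  set Rb := R.filter (fun z => (3:ℝ)/2 ≤ ‖z‖) with hRb
  set Rs := R.filter (fun z => ¬ ((3:ℝ)/2 ≤ ‖z‖)) with hRs
  have hRsplit : Rb + Rs = R := Multiset.filter_add_not _ _
  set k := Multiset.card Rb with hk
  show k ≤ 64 * M
  have hball : ∀ z ∈ Rb, (3:ℝ)/2 ≤ ‖z‖ := fun z hz => (Multiset.mem_filter.mp hz).2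
  have hbne : ∀ z ∈ Rb, z ≠ 0 := by
    intro z hz h0
    have := hball z hz
    rw [h0] at this
    simp at this
    linarith
  have hM1 : 1 ≤ M := by
    have h1 : f.leadingCoeff ≠ 0 := leadingCoeff_ne_zero.mpr hf
    have h2 := hcoeff f.natDegree
    have h3 : 1 ≤ |f.leadingCoeff| := Int.one_le_abs h1
    rw [Polynomial.leadingCoeff] at h1 h3
    omega
  have hc1 : (1:ℝ) ≤ Complex.normSq c := by
    have hcc : c = ((f.leadingCoeff : ℤ) : ℂ) := by
      rw [hc, hFdef, Polynomial.leadingCoeff_map_of_injective hinj]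
      simp
    have h1 : f.leadingCoeff ≠ 0 := leadingCoeff_ne_zero.mpr hf
    have h3 : 1 ≤ |f.leadingCoeff| := Int.one_le_abs h1
    rw [hcc, Complex.normSq_intCast]
    have h4 : (1:ℤ) ≤ f.leadingCoeff * f.leadingCoeff := by
      rw [← abs_mul_abs_self]
      nlinarith
    exact_mod_cast h4
  set G := F.reverse with hG
  have hGfact : G = C c * ((Rb.map (fun z => 1 - C z * X)).prod
      * (Rs.map (fun z => 1 - C z * X)).prod) := by
    rw [hG, hsplit, reverse_mul_of_domain, reverse_C, reverse_prod, ← hRsplit,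
      Multiset.map_add, Multiset.prod_add]
  set T := Rb.map (fun z => z⁻¹) with hT
  have hbig : (Rb.map (fun z => 1 - C z * X)).prod
      = C ((Rb.map (fun z => -z)).prod) * (T.map (fun w => X - C w)).prod := by
    rw [hT, Multiset.map_map, map_multiset_prod, Multiset.map_map, ← Multiset.prod_map_mul]
    refine congrArg Multiset.prod (Multiset.map_congr rfl ?_).symm
    intro z hz
    have hz0 := hbne z hz
    simp only [Function.comp]
    rw [mul_sub, ← C_mul, neg_mul, mul_inv_cancel₀ hz0, C_neg, C_neg, C_1]
    ring
  set q := C c * C ((Rb.map (fun z => -z)).prod) * (Rs.map (fun z => 1 - C z * X)).prod with hq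
  have hGTq : G = (T.map (fun w => X - C w)).prod * q := by
    rw [hGfact, hbig, hq]
    ring
  have hcardT : Multiset.card T = k := by rw [hT, Multiset.card_map, hk]
  have hdegq : q.natDegree ≤ Multiset.card Rs := by
    rw [hq]
    refine le_trans natDegree_mul_le ?_
    have h0 : (C c * C ((Rb.map (fun z => -z)).prod)).natDegree = 0 := by
      rw [← C_mul, natDegree_C]
    have hp : ((Rs.map (fun z => 1 - C z * X)).prod).natDegree ≤ Multiset.card Rs := by
      refine le_trans (Polynomial.natDegree_multiset_prod_le _) ?_
      rw [Multiset.map_map]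
      refine le_trans (Multiset.sum_map_le_sum_map _ (fun _ => 1) ?_) ?_
      · intro z _
        simp only [Function.comp]
        refine le_trans (natDegree_sub_le _ _) ?_
        have h5 := natDegree_C_mul_le z (X : Polynomial ℂ)
        simp only [natDegree_one, natDegree_X] at h5 ⊢
        omega
      · simp [Multiset.map_const']
    omega
  have hcards : Multiset.card Rb + Multiset.card Rs ≤ n := by
    have h1 : Multiset.card R ≤ n := Polynomial.card_roots' F
    rw [← hRsplit, Multiset.card_add] at h1
    exact h1
  have hcard : Multiset.card T + q.natDegree ≤ n := by
    rw [hcardT]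
    omega
  have hland := landau n T q hcard
  rw [← hGTq, hcardT] at hland
  set P := (T.map (fun w => C ((starRingEnd ℂ) w) * X - C tC)).prod * q with hP
  have hP0 : P.coeff 0 = (-tC)^k * (c * (Rb.map (fun z => -z)).prod) := by
    rw [hP, coeff_zero_eq_eval_zero, eval_mul, eval_multiset_prod, Multiset.map_map]
    have h1 : Multiset.map (eval 0 ∘ fun w => C ((starRingEnd ℂ) w) * X - C tC) T
        = Multiset.map (fun _ => -tC) T := by
      apply Multiset.map_congr rfl
      intro w _
      simp
    have h2 : eval 0 q = c * (Rb.map (fun z => -z)).prod := by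
      rw [hq, eval_mul, eval_mul, eval_C, eval_C, eval_multiset_prod, Multiset.map_map]
      have h3 : Multiset.map (eval 0 ∘ fun z => 1 - C z * X) Rs
          = Multiset.map (fun _ => (1:ℂ)) Rs := by
        apply Multiset.map_congr rfl
        intro w _
        simp
      rw [h3, Multiset.map_const', Multiset.prod_replicate, one_pow, mul_one]
    rw [h1, h2, Multiset.map_const', Multiset.prod_replicate, hcardT]
  have hlow : ((64:ℝ)/81)^(2*k) * ((9:ℝ)/4)^k ≤ Complex.normSq (P.coeff 0) := by
    rw [hP0, map_mul, map_pow, map_mul]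
    have e1 : Complex.normSq (-tC) = ((64:ℝ)/81)^2 := by
      rw [Complex.normSq_neg, show tC = (((64:ℝ)/81 : ℝ) : ℂ) from rfl, Complex.normSq_ofReal]
      ring
    have e2 : ((9:ℝ)/4)^k ≤ Complex.normSq ((Rb.map (fun z => -z)).prod) := by
      rw [map_multiset_prod, Multiset.map_map]
      have e3 : ((9:ℝ)/4)^k = ((Rb.map (fun _ => ((9:ℝ)/4))).prod) := by
        rw [Multiset.map_const', Multiset.prod_replicate, hk]
      rw [e3]
      apply Multiset.prod_map_le_prod_map₀
      · intro z _
        norm_num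
      · intro z hz
        simp only [Function.comp]
        rw [Complex.normSq_neg, ← Complex.sq_norm]
        have := hball z hz
        nlinarith
    rw [e1, ← pow_mul]
    have h9 : (0:ℝ) ≤ ((64:ℝ)/81)^(2*k) := by positivity
    have h10 : ((9:ℝ)/4)^k ≤ Complex.normSq c * Complex.normSq ((Rb.map (fun z => -z)).prod) := by
      nlinarith [e2, hc1, Complex.normSq_nonneg ((Rb.map (fun z => -z)).prod),
        pow_nonneg (by norm_num : (0:ℝ) ≤ (9:ℝ)/4) k]
    exact mul_le_mul_of_nonneg_left h10 h9
  have htr : tR = (64:ℝ)/81 := rfl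
  have htr0 : (0:ℝ) ≤ tR := by rw [htr]; norm_num
  have hup1 : Complex.normSq (P.coeff 0) ≤ NN n P := by
    have h := Finset.single_le_sum (f := fun i => Complex.normSq (P.coeff i) * tR ^ i)
      (fun i _ => mul_nonneg (Complex.normSq_nonneg _) (pow_nonneg htr0 _))
      (Finset.mem_range.mpr (Nat.succ_pos n))
    simpa [NN] using h
  have castbound : ∀ z : ℤ, |z| ≤ (M:ℤ) → Complex.normSq ((z : ℤ) : ℂ) ≤ (M:ℝ)^2 := by
    intro z hz
    rw [Complex.normSq_intCast]
    have h4 : z * z ≤ (M:ℤ)*(M:ℤ) := by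
      rw [← abs_mul_abs_self]
      nlinarith [abs_nonneg z]
    have h5 : ((z*z : ℤ):ℝ) ≤ (((M:ℤ)*(M:ℤ) : ℤ):ℝ) := by exact_mod_cast h4
    push_cast at h5 ⊢
    nlinarith [h5]
  have hcoF : ∀ j, F.coeff j = ((f.coeff j : ℤ) : ℂ) := by
    intro j
    rw [hFdef, Polynomial.coeff_map]
    simp
  have hGcoeff : ∀ i, Complex.normSq (G.coeff i) ≤ (M:ℝ)^2 := by
    intro i
    rw [hG, Polynomial.coeff_reverse, hcoF]
    exact castbound _ (hcoeff _)
  have hNG : NN n G ≤ (M:ℝ)^2 * (81/17) := by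
    have hterm : ∀ i ∈ Finset.range (n+1),
        Complex.normSq (G.coeff i) * tR ^ i ≤ (M:ℝ)^2 * tR ^ i := by
      intro i _
      have h6 := hGcoeff i
      have ht : (0:ℝ) ≤ tR ^ i := pow_nonneg htr0 _
      nlinarith
    have h1 : NN n G ≤ ∑ i ∈ Finset.range (n+1), (M:ℝ)^2 * tR ^ i := Finset.sum_le_sum hterm
    have h3 : (∑ i ∈ Finset.range (n+1), tR ^ i) ≤ 81/17 := by
      have hgm := geom_sum_mul tR (n+1)
      have hpow : (0:ℝ) ≤ tR ^ (n+1) := pow_nonneg htr0 _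
      rw [htr] at hgm hpow ⊢
      nlinarith [hgm, hpow]
    calc NN n G ≤ ∑ i ∈ Finset.range (n+1), (M:ℝ)^2 * tR ^ i := h1
      _ = (M:ℝ)^2 * ∑ i ∈ Finset.range (n+1), tR ^ i := by rw [Finset.mul_sum]
      _ ≤ (M:ℝ)^2 * (81/17) := by nlinarith [h3, sq_nonneg (M:ℝ)]
  have hfin : ((16:ℝ)/9)^k ≤ 5 * (M:ℝ)^2 := by
    have hA : ((64:ℝ)/81)^(2*k) * ((9:ℝ)/4)^k ≤ tR^k * ((M:ℝ)^2 * (81/17)) := by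
      calc ((64:ℝ)/81)^(2*k) * ((9:ℝ)/4)^k ≤ Complex.normSq (P.coeff 0) := hlow
        _ ≤ NN n P := hup1
        _ = tR^k * NN n G := hland
        _ ≤ tR^k * ((M:ℝ)^2 * (81/17)) := by
            have h7 : (0:ℝ) ≤ tR^k := pow_nonneg htr0 _
            nlinarith [hNG, h7]
    rw [htr] at hA
    have hB : ((16:ℝ)/9)^k * ((64:ℝ)/81)^k ≤ ((M:ℝ)^2 * (81/17)) * ((64:ℝ)/81)^k := by
      calc ((16:ℝ)/9)^k * ((64:ℝ)/81)^k = ((64:ℝ)/81)^(2*k) * ((9:ℝ)/4)^k := by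
            rw [← mul_pow, pow_mul, ← mul_pow]
            norm_num
        _ ≤ ((64:ℝ)/81)^k * ((M:ℝ)^2 * (81/17)) := hA
        _ = ((M:ℝ)^2 * (81/17)) * ((64:ℝ)/81)^k := by ring
    have hpos : (0:ℝ) < ((64:ℝ)/81)^k := by positivity
    have hC : ((16:ℝ)/9)^k ≤ (M:ℝ)^2 * (81/17) := le_of_mul_le_mul_right hB hpos
    nlinarith [hC, sq_nonneg (M:ℝ)]
  exact arith M k hM1 hfin
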